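/- Take n orderings of the variables x_1,…,x_n such that for every index i there is one ordering in which x_i is the greatest element, and take the corresponding n lexicographic term orders. If 𝓕 ⊆ 2^[n] is not shattering-extremal, then among these n lex orders there are two for which the sets of standard monomials of I(𝓕) differ. Equivalently: if Sm(I(𝓕)) is the same for all n of these lex orders, then 𝓕 is s-extremal. -/

import Mathlib

open MvPolynomial

/-- Monomials of `𝔽[x_1,…,x_n]` identified with their exponent vectors. -/
abbrev Mon (n : ℕ) := Fin n →₀ ℕ

/-- A linear order on monomials is a term order if `1` (i.e. the zero exponent
vector) is minimal and the order is compatible with multiplication by monomials. -/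
def IsTermOrder {n : ℕ} (lin : LinearOrder (Mon n)) : Prop :=
  (∀ u : Mon n, lin.le 0 u) ∧
    ∀ u v w : Mon n, lin.le u v → lin.le (u + w) (v + w)

/-- The strict lexicographic comparison of exponent vectors induced by the variable
ordering `x_{σ 0} ≻ x_{σ 1} ≻ ⋯ ≻ x_{σ (n-1)}`. -/
def lexLt {n : ℕ} (σ : Equiv.Perm (Fin n)) (u v : Mon n) : Prop :=
  ∃ j : Fin n, u (σ j) < v (σ j) ∧ ∀ i : Fin n, i < j → u (σ i) = v (σ i)

/-- `lin` is the lexicographic term order induced by the variable ordering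
`x_{σ 0} ≻ x_{σ 1} ≻ ⋯ ≻ x_{σ (n-1)}`. -/
def IsLexOrder {n : ℕ} (σ : Equiv.Perm (Fin n)) (lin : LinearOrder (Mon n)) : Prop :=
  ∀ u v : Mon n, lin.lt u v ↔ lexLt σ u v

/-- `m` is the leading monomial of `f` with respect to the monomial order `lin`. -/
def IsLeadMon {n : ℕ} {F : Type*} [CommSemiring F] (lin : LinearOrder (Mon n))
    (f : MvPolynomial (Fin n) F) (m : Mon n) : Prop :=
  m ∈ f.support ∧ ∀ m' ∈ f.support, lin.le m' m

/-- The set of standard monomials of an ideal `I` with respect to the monomial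
order `lin`: monomials that are not the leading monomial of any nonzero `f ∈ I`. -/
def stdMon {n : ℕ} {F : Type*} [CommSemiring F] (lin : LinearOrder (Mon n))
    (I : Ideal (MvPolynomial (Fin n) F)) : Set (Mon n) :=
  { m | ¬ ∃ f ∈ I, f ≠ 0 ∧ IsLeadMon lin f m }

/-- The vanishing ideal of a point set `V ⊆ F^n`. -/
def vanishIdeal {n : ℕ} {F : Type*} [CommRing F] (V : Set (Fin n → F)) :
    Ideal (MvPolynomial (Fin n) F) where
  carrier := { f | ∀ v ∈ V, MvPolynomial.eval v f = 0 }
  add_mem' := by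
    intro a b ha hb v hv
    simp [map_add, ha v hv, hb v hv]
  zero_mem' := by intro v hv; simp
  smul_mem' := by
    intro c f hf v hv
    simp [smul_eq_mul, hf v hv]

/-- A finite point set (in `{0,…,k-1}^n`, over any field) is extremal if its vanishing
ideal has the same standard monomials for every lexicographic term order. -/
def IsExtremal {n : ℕ} {F : Type*} [CommRing F] (V : Set (Fin n → F)) : Prop :=
  ∀ (σ₁ σ₂ : Equiv.Perm (Fin n)) (lin₁ lin₂ : LinearOrder (Mon n)),
    IsLexOrder σ₁ lin₁ → IsLexOrder σ₂ lin₂ →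
      stdMon lin₁ (vanishIdeal V) = stdMon lin₂ (vanishIdeal V)

/-- Embedding of a point of `{0,…,k-1}^n` into `F^n`. -/
def toField {n k : ℕ} (F : Type*) [Field F] (w : Fin n → Fin k) : Fin n → F :=
  fun i => ((w i : ℕ) : F)

/-- Identification of a point of `{0,…,k-1}^n` with an exponent vector in `ℕ^n`. -/
noncomputable def toExp {n k : ℕ} (w : Fin n → Fin k) : Mon n :=
  Finsupp.equivFunOnFinite.symm fun i => (w i : ℕ)

/-- The downshift `D_i(V)` of `V ⊆ {0,…,k-1}^n` at coordinate `i`: its `i`-section at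
each choice of the other coordinates is `{0,1,…,m-1}` where `m` is the size of the
corresponding `i`-section of `V`. -/
def downshift {n k : ℕ} (V : Finset (Fin n → Fin k)) (i : Fin n) :
    Finset (Fin n → Fin k) :=
  Finset.univ.filter fun w =>
    (w i : ℕ) < (Finset.univ.filter fun α : Fin k => Function.update w i α ∈ V).card

/-- The iterated downshift `D_{σ(n-1)}(D_{σ(n-2)}(⋯(D_{σ 0}(V))))`,
i.e. downshifts are applied at coordinates `σ 0, σ 1, …, σ (n-1)` in this order. -/
def iterDownshift {n k : ℕ} (σ : Equiv.Perm (Fin n)) (V : Finset (Fin n → Fin k)) :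
    Finset (Fin n → Fin k) :=
  (List.ofFn fun j : Fin n => σ j).foldl downshift V

/-- A polynomial is degree dominated (with dominating term `x^w`) if it equals
`x^w + Σ αᵢ x^{vᵢ}` where each `x^{vᵢ}` divides `x^w`. -/
def IsDegDominated {n : ℕ} {F : Type*} [CommSemiring F]
    (f : MvPolynomial (Fin n) F) : Prop :=
  ∃ w : Mon n, MvPolynomial.coeff w f = 1 ∧ ∀ v ∈ f.support, v ≤ w

/-- `G` is a Gröbner basis of `I` with respect to the monomial order `lin`:
`G ⊆ I` and for every nonzero `f ∈ I` some `g ∈ G` has leading monomial dividing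
the leading monomial of `f` (divisibility of monomials being `≤` of exponents). -/
def IsGroebner {n : ℕ} {F : Type*} [CommSemiring F] (lin : LinearOrder (Mon n))
    (G : Finset (MvPolynomial (Fin n) F)) (I : Ideal (MvPolynomial (Fin n) F)) : Prop :=
  (∀ g ∈ G, g ∈ I) ∧
    ∀ f ∈ I, f ≠ 0 → ∀ m : Mon n, IsLeadMon lin f m →
      ∃ g ∈ G, ∃ mg : Mon n, IsLeadMon lin g mg ∧ mg ≤ m

/-- `G` is a universal Gröbner basis of `I` if it is a Gröbner basis for every term order. -/
def IsUnivGroebner {n : ℕ} {F : Type*} [CommSemiring F]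
    (G : Finset (MvPolynomial (Fin n) F)) (I : Ideal (MvPolynomial (Fin n) F)) : Prop :=
  ∀ lin : LinearOrder (Mon n), IsTermOrder lin → IsGroebner lin G I

/-- A term order is an elimination order with respect to `x_i` if `x_i` is greater
than every monomial not involving `x_i`. -/
def IsElimOrder {n : ℕ} (lin : LinearOrder (Mon n)) (i : Fin n) : Prop :=
  IsTermOrder lin ∧ ∀ m : Mon n, m i = 0 → lin.lt m (Finsupp.single i 1)

/-- A set system `𝓕` shatters `S` if every subset of `S` is the intersection of `S`
with a member of `𝓕`. -/
def Shatters {n : ℕ} (𝓕 : Finset (Finset (Fin n))) (S : Finset (Fin n)) : Prop :=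
  ∀ T ⊆ S, ∃ Fm ∈ 𝓕, Fm ∩ S = T

open scoped Classical in
/-- The family `Sh(𝓕)` of sets shattered by `𝓕`. -/
noncomputable def shatteredFamily {n : ℕ} (𝓕 : Finset (Finset (Fin n))) :
    Finset (Finset (Fin n)) :=
  Finset.univ.filter fun S => Shatters 𝓕 S

/-- A set system is shattering-extremal if it shatters exactly `|𝓕|` sets. -/
def IsSExtremal {n : ℕ} (𝓕 : Finset (Finset (Fin n))) : Prop :=
  (shatteredFamily 𝓕).card = 𝓕.card

/-- The characteristic vector of a set, as a point of `F^n`. -/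
def charVec {n : ℕ} (F : Type*) [Field F] (Fm : Finset (Fin n)) : Fin n → F :=
  fun i => if i ∈ Fm then 1 else 0

/-- The squarefree monomial `∏_{i ∈ S} x_i` associated to a set `S ⊆ [n]`,
as an exponent vector. -/
noncomputable def setMon {n : ℕ} (S : Finset (Fin n)) : Mon n :=
  Finsupp.equivFunOnFinite.symm fun i => if i ∈ S then 1 else 0

/-- The polynomial `f_{S,H} = (∏_{i∈H} x_i) ⬝ ∏_{i∈S∖H} (x_i - 1)`. -/
noncomputable def fSH {n : ℕ} (F : Type*) [Field F] (S H : Finset (Fin n)) :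
    MvPolynomial (Fin n) F :=
  (∏ i ∈ H, X i) * ∏ i ∈ S \ H, (X i - 1)

/-- The downshift `D_i(𝓕)` of a set system. -/
def dshiftSet {n : ℕ} (𝓕 : Finset (Finset (Fin n))) (i : Fin n) :
    Finset (Finset (Fin n)) :=
  𝓕.image (fun Fm => Fm.erase i) ∪ 𝓕.filter fun Fm => i ∈ Fm ∧ Fm.erase i ∈ 𝓕

/-- The iterated downshift `D_{σ(n-1)}(⋯(D_{σ 0}(𝓕)))` of a set system:
downshifts are applied at `σ 0, σ 1, …, σ (n-1)` in this order. -/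
def iterDshiftSet {n : ℕ} (σ : Equiv.Perm (Fin n)) (𝓕 : Finset (Finset (Fin n))) :
    Finset (Finset (Fin n)) :=
  (List.ofFn fun j : Fin n => σ j).foldl dshiftSet 𝓕

/-- Restriction of an exponent vector in `ℕ^{n+1}` to its first `n` coordinates. -/
noncomputable def restrictMon {n : ℕ} (w : Mon (n + 1)) : Mon n :=
  Finsupp.equivFunOnFinite.symm fun i => w i.castSucc

section Aux

open MvPolynomial

variable {n : ℕ}

/-- Maximum of a nonempty finset of monomials with respect to an arbitrary linear order. -/
theorem exists_lin_max (lin : LinearOrder (Mon n)) (s : Finset (Mon n)) (hs : s.Nonempty) :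
    ∃ m ∈ s, ∀ m' ∈ s, lin.le m' m := by
  letI := lin
  exact s.exists_max_image id hs

theorem exists_leadMon {F : Type*} [CommSemiring F] (lin : LinearOrder (Mon n))
    {f : MvPolynomial (Fin n) F} (hf : f ≠ 0) : ∃ m, IsLeadMon lin f m := by
  obtain ⟨m, hm, hmax⟩ := exists_lin_max lin f.support
    (by rwa [Finset.nonempty_iff_ne_empty, Ne, MvPolynomial.support_eq_empty])
  exact ⟨m, hm, hmax⟩

/-- The lexicographic order is well-founded. -/
theorem lexLt_wf {σ : Equiv.Perm (Fin n)} {lin : LinearOrder (Mon n)}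
    (hlin : IsLexOrder σ lin) : WellFounded lin.lt := by
  have hwf : WellFounded (Pi.Lex (· < ·) (fun {_ : Fin n} => (· < · : ℕ → ℕ → Prop))) :=
    Pi.Lex.wellFounded _ fun _ => Nat.lt_wfRel.wf
  have : WellFounded (lexLt σ (n := n)) := by
    have := InvImage.wf (fun u : Mon n => fun k => u (σ k)) hwf
    apply Subrelation.wf ?_ this
    rintro u v ⟨j, hj, hpre⟩
    exact ⟨j, fun i hij => hpre i hij, hj⟩
  apply Subrelation.wf ?_ this
  intro u v huv
  exact (hlin u v).mp huv

end Aux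
section Aux2

open MvPolynomial

variable {n : ℕ} {F : Type*} [Field F]

theorem charVec_eval (Fm : Finset (Fin n)) (m : Mon n) (c : F) :
    MvPolynomial.eval (charVec F Fm) (monomial m c) =
      c * (if m.support ⊆ Fm then 1 else 0) := by
  classical
  rw [eval_monomial]
  congr 1
  rw [Finsupp.prod]
  by_cases hsub : m.support ⊆ Fm
  · rw [if_pos hsub]
    apply Finset.prod_eq_one
    intro i hi
    have : charVec F Fm i = 1 := by
      rw [charVec, if_pos (hsub hi)]
    rw [this, one_pow]
  · rw [if_neg hsub]
    obtain ⟨i, hi, hiF⟩ := Finset.not_subset.mp hsub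
    apply Finset.prod_eq_zero hi
    have : charVec F Fm i = 0 := by rw [charVec, if_neg hiF]
    rw [this, zero_pow (Finsupp.mem_support_iff.mp hi)]

theorem stdMon_squarefree {σ : Equiv.Perm (Fin n)} {lin : LinearOrder (Mon n)}
    (hlin : IsLexOrder σ lin) (V : Set (Fin n → F))
    (hV : ∀ v ∈ V, ∀ i, v i = 0 ∨ v i = 1)
    {m : Mon n} (hm : m ∈ stdMon lin (vanishIdeal V)) : ∀ j, m j ≤ 1 := by
  classical
  intro j
  by_contra hj
  push_neg at hj
  have h2 : 2 ≤ m j := hj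
  set m' : Mon n := m - Finsupp.single j 1 with hm'
  have hm'app : ∀ i, m' i = m i - (if j = i then 1 else 0) := by
    intro i
    rw [hm', Finsupp.tsub_apply, Finsupp.single_apply]
  have hm'j : m' j = m j - 1 := by rw [hm'app j, if_pos rfl]
  have hm'ne : m' ≠ m := by
    intro hEq
    have := congrFun (congrArg (fun f : Mon n => (f : Fin n → ℕ)) hEq) j
    rw [hm'j] at this
    omega
  have hm'i : ∀ i, i ≠ j → m' i = m i := by
    intro i hi
    rw [hm'app i, if_neg (fun hji => hi hji.symm)]
    omega
  set p : MvPolynomial (Fin n) F := monomial m 1 - monomial m' 1 with hp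
  have hpcoeff : ∀ m'' : Mon n, coeff m'' p =
      (if m = m'' then (1:F) else 0) - (if m' = m'' then 1 else 0) := by
    intro m''
    rw [hp, coeff_sub, coeff_monomial, coeff_monomial]
  have hpne : p ≠ 0 := by
    intro h0
    have := hpcoeff m
    rw [h0] at this
    simp only [coeff_zero, if_pos rfl, if_neg hm'ne] at this
    norm_num at this
  have hpmem : p ∈ vanishIdeal V := by
    intro v hv
    rw [hp, map_sub, eval_monomial, eval_monomial]
    rw [Finsupp.prod_fintype _ _ (fun i => pow_zero (v i)),
      Finsupp.prod_fintype _ _ (fun i => pow_zero (v i))]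
    have : ∀ i : Fin n, v i ^ m i = v i ^ m' i := by
      intro i
      by_cases hij : i = j
      · subst hij
        rcases hV v hv i with h0 | h1
        · rw [h0, zero_pow (by omega), zero_pow (by rw [hm'j]; omega)]
        · rw [h1, one_pow, one_pow]
      · rw [hm'i i hij]
    rw [Finset.prod_congr rfl (fun i _ => this i)]
    ring
  have hlead : IsLeadMon lin p m := by
    constructor
    · rw [mem_support_iff, hpcoeff m, if_pos rfl, if_neg hm'ne]
      norm_num
    · intro m'' hm''
      rw [mem_support_iff, hpcoeff m''] at hm''
      by_cases h1 : m = m''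
      · subst h1; exact lin.le_refl m
      · have h2' : m' = m'' := by
          by_contra h2''
          rw [if_neg h1, if_neg h2''] at hm''
          norm_num at hm''
        subst h2'
        have hlt : lin.lt m' m := by
          rw [hlin]
          refine ⟨σ.symm j, ?_, ?_⟩
          · rw [Equiv.apply_symm_apply, hm'j]
            omega
          · intro i hij
            apply hm'i
            intro hEq
            have hEq2 : i = σ.symm j := by rw [← hEq, Equiv.symm_apply_apply]
            rw [hEq2] at hij
            exact lt_irrefl _ hij
        exact ((lin.lt_iff_le_not_ge _ _).mp hlt).1
  exact hm ⟨p, hpmem, hpne, hlead⟩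

theorem alt_sum (S T : Finset (Fin n)) (hT : T ⊆ S) :
    ∑ U ∈ S.powerset, ((-1:F)^((S \ U).card) * (if T ⊆ U then 1 else 0)) =
      if T = S then 1 else 0 := by
  classical
  have step1 : ∑ U ∈ S.powerset, ((-1:F)^((S \ U).card) * (if T ⊆ U then 1 else 0)) =
      ∑ U ∈ S.powerset.filter (fun U => T ⊆ U), (-1:F)^((S \ U).card) := by
    rw [Finset.sum_filter]
    apply Finset.sum_congr rfl
    intro U _
    by_cases hTU : T ⊆ U
    · rw [if_pos hTU, if_pos hTU, mul_one]
    · rw [if_neg hTU, if_neg hTU, mul_zero]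
  rw [step1]
  have step2 : ∑ U ∈ S.powerset.filter (fun U => T ⊆ U), (-1:F)^((S \ U).card) =
      ∑ W ∈ (S \ T).powerset, (-1:F)^W.card := by
    apply Finset.sum_nbij' (fun U => S \ U) (fun W => S \ W)
    · intro U hU
      rw [Finset.mem_filter, Finset.mem_powerset] at hU
      rw [Finset.mem_powerset]
      exact Finset.sdiff_subset_sdiff le_rfl hU.2
    · intro W hW
      rw [Finset.mem_powerset] at hW
      rw [Finset.mem_filter, Finset.mem_powerset]
      refine ⟨Finset.sdiff_subset, ?_⟩
      intro t ht
      rw [Finset.mem_sdiff]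
      refine ⟨hT ht, fun htW => ?_⟩
      have := hW htW
      rw [Finset.mem_sdiff] at this
      exact this.2 ht
    · intro U hU
      rw [Finset.mem_filter, Finset.mem_powerset] at hU
      exact Finset.sdiff_sdiff_eq_self hU.1
    · intro W hW
      rw [Finset.mem_powerset] at hW
      exact Finset.sdiff_sdiff_eq_self (hW.trans Finset.sdiff_subset)
    · intro U _
      rfl
  rw [step2]
  have hz := Finset.sum_powerset_neg_one_pow_card (x := S \ T)
  have : ((∑ W ∈ (S \ T).powerset, (-1:ℤ)^W.card : ℤ) : F) =
      ∑ W ∈ (S \ T).powerset, (-1:F)^W.card := by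
    push_cast
    rfl
  rw [← this, hz]
  by_cases hTS : T = S
  · rw [if_pos hTS, if_pos (by rw [hTS]; exact Finset.sdiff_self S)]
    norm_num
  · rw [if_neg hTS, if_neg ?_]
    · norm_num
    · intro hEmpty
      exact hTS (le_antisymm hT (Finset.sdiff_eq_empty_iff_subset.mp hEmpty))

end Aux2
section Aux3

open MvPolynomial

variable {n : ℕ} {F : Type*} [Field F]

theorem mem_stdMon_iff {lin : LinearOrder (Mon n)} {I : Ideal (MvPolynomial (Fin n) F)}
    {m : Mon n} : m ∈ stdMon lin I ↔ ¬ ∃ f ∈ I, f ≠ 0 ∧ IsLeadMon lin f m := Iff.rfl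

/-- Normal form with respect to the standard monomials of `I`. -/
theorem exists_nf {lin : LinearOrder (Mon n)} (hwf : WellFounded lin.lt)
    (I : Ideal (MvPolynomial (Fin n) F)) (f : MvPolynomial (Fin n) F) :
    ∃ h : MvPolynomial (Fin n) F, (∀ m ∈ h.support, m ∈ stdMon lin I) ∧ f - h ∈ I := by
  classical
  have key : ∀ m : Mon n, ∀ f : MvPolynomial (Fin n) F, f ≠ 0 → IsLeadMon lin f m →
      ∃ h, (∀ m' ∈ h.support, m' ∈ stdMon lin I) ∧ f - h ∈ I := by
    intro m
    refine hwf.induction (C := fun m => ∀ f, f ≠ 0 → IsLeadMon lin f m →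
      ∃ h, (∀ m' ∈ h.support, m' ∈ stdMon lin I) ∧ f - h ∈ I) m ?_
    clear m
    intro m IH f hf hlead
    by_cases hstd : m ∈ stdMon lin I
    · set c := coeff m f with hc
      set f' := f - monomial m c with hf'def
      have hcoeff' : ∀ m'', coeff m'' f' = coeff m'' f - (if m = m'' then c else 0) := by
        intro m''
        rw [hf'def, coeff_sub, coeff_monomial]
      have hcm : coeff m f' = 0 := by rw [hcoeff' m, if_pos rfl, hc, sub_self]
      by_cases hf0 : f' = 0
      · refine ⟨monomial m c, ?_, ?_⟩
        · intro m' hm'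
          rcases Finset.mem_singleton.mp (by
            by_cases hc0 : c = 0
            · rw [hc0, monomial_zero] at hm'
              simp at hm'
            · rwa [support_monomial, if_neg hc0] at hm' : m' ∈ ({m} : Finset (Mon n))) with rfl
          exact hstd
        · have : f - monomial m c = f' := rfl
          rw [this, hf0]
          exact I.zero_mem
      · have hltall : ∀ m'' ∈ f'.support, lin.lt m'' m := by
          intro m'' hm''
          have hne : m'' ≠ m := by
            intro hEq; rw [hEq] at hm''; exact (mem_support_iff.mp hm'') hcm
          have hle : lin.le m'' m := by
            apply hlead.2
            rw [mem_support_iff]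
            intro h0
            rw [mem_support_iff, hcoeff' m'', h0, if_neg (fun hEq => hne hEq.symm),
              sub_zero] at hm''
            exact hm'' rfl
          exact lin.lt_iff_le_not_ge m'' m |>.mpr ⟨hle, fun hle' =>
            hne (lin.le_antisymm _ _ hle hle')⟩
        obtain ⟨m₁, hm₁⟩ := exists_leadMon lin hf0
        obtain ⟨h', hh', hmem⟩ := IH m₁ (hltall m₁ hm₁.1) f' hf0 hm₁
        refine ⟨h' + monomial m c, ?_, ?_⟩
        · intro m' hm'
          rcases Finset.mem_union.mp (MvPolynomial.support_add hm') with hm' | hm'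
          · exact hh' m' hm'
          · by_cases hc0 : c = 0
            · rw [hc0, monomial_zero] at hm'
              simp at hm'
            · rw [support_monomial, if_neg hc0] at hm'
              rcases Finset.mem_singleton.mp hm' with rfl
              exact hstd
        · have : f - (h' + monomial m c) = f' - h' := by rw [hf'def]; ring
          rw [this]
          exact hmem
    · obtain ⟨p, hpI, hpne, hplead⟩ := not_not.mp hstd
      have hcp : coeff m p ≠ 0 := mem_support_iff.mp hplead.1
      set q := f - C (coeff m f / coeff m p) * p with hqdef
      have hfq : f - q ∈ I := by
        have : f - q = C (coeff m f / coeff m p) * p := by rw [hqdef]; ring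
        rw [this]
        exact I.mul_mem_left _ hpI
      by_cases hq0 : q = 0
      · refine ⟨0, by simp, ?_⟩
        rw [sub_zero]
        have : f = f - q := by rw [hq0, sub_zero]
        rw [this]
        exact hfq
      · have hcm : coeff m q = 0 := by
          rw [hqdef, coeff_sub, coeff_C_mul, div_mul_cancel₀ _ hcp, sub_self]
        have hltall : ∀ m'' ∈ q.support, lin.lt m'' m := by
          intro m'' hm''
          have hne : m'' ≠ m := by
            intro hEq; rw [hEq] at hm''; exact (mem_support_iff.mp hm'') hcm
          have hle : lin.le m'' m := by
            have hcoeffq : coeff m'' q = coeff m'' f -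
                (coeff m f / coeff m p) * coeff m'' p := by
              rw [hqdef, coeff_sub, coeff_C_mul]
            have := mem_support_iff.mp hm''
            rw [hcoeffq] at this
            by_cases hmf : coeff m'' f ≠ 0
            · exact hlead.2 m'' (mem_support_iff.mpr hmf)
            · push_neg at hmf
              rw [hmf, zero_sub, neg_ne_zero] at this
              have hp'' : coeff m'' p ≠ 0 := by
                intro h0; rw [h0, mul_zero] at this; exact this rfl
              exact hplead.2 m'' (mem_support_iff.mpr hp'')
          exact lin.lt_iff_le_not_ge m'' m |>.mpr ⟨hle, fun hle' =>
            hne (lin.le_antisymm _ _ hle hle')⟩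
        obtain ⟨m₁, hm₁⟩ := exists_leadMon lin hq0
        obtain ⟨h', hh', hmem⟩ := IH m₁ (hltall m₁ hm₁.1) q hq0 hm₁
        refine ⟨h', hh', ?_⟩
        have : f - h' = (f - q) + (q - h') := by ring
        rw [this]
        exact I.add_mem hfq hmem
  by_cases hf : f = 0
  · exact ⟨0, by simp, by rw [hf, sub_zero]; exact I.zero_mem⟩
  · obtain ⟨m, hm⟩ := exists_leadMon lin hf
    exact key m f hf hm

end Aux3
section Aux4
open scoped Classical

open MvPolynomial

variable {n : ℕ} {F : Type*} [Field F]

theorem setMon_apply (S : Finset (Fin n)) (i : Fin n) :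
    setMon S i = if i ∈ S then 1 else 0 := by
  simp [setMon]

theorem setMon_support (S : Finset (Fin n)) : (setMon S).support = S := by
  classical
  ext i
  rw [Finsupp.mem_support_iff, setMon_apply]
  by_cases hi : i ∈ S <;> simp [hi]

theorem setMon_le_one (S : Finset (Fin n)) (j : Fin n) : setMon S j ≤ 1 := by
  rw [setMon_apply]
  split <;> omega

/-- The key lemma: if all the `n` lex standard monomial sets agree, then the monomial of
every shattered set is standard. -/
theorem shattered_mem_stdMon (hn : 0 < n) (𝓕 : Finset (Finset (Fin n)))
    (σ : Fin n → Equiv.Perm (Fin n)) (hσ : ∀ i : Fin n, σ i ⟨0, hn⟩ = i)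
    (lin : Fin n → LinearOrder (Mon n)) (hlin : ∀ i : Fin n, IsLexOrder (σ i) (lin i))
    (Heq : ∀ i j : Fin n,
      stdMon (lin i) (vanishIdeal ((𝓕.image (charVec F) : Finset (Fin n → F)) :
          Set (Fin n → F))) =
        stdMon (lin j) (vanishIdeal ((𝓕.image (charVec F) : Finset (Fin n → F)) :
          Set (Fin n → F))))
    {S : Finset (Fin n)} (hS : Shatters 𝓕 S) (i₀ : Fin n) :
    setMon S ∈ stdMon (lin i₀) (vanishIdeal ((𝓕.image (charVec F) : Finset (Fin n → F)) :
          Set (Fin n → F))) := by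
  classical
  set V : Set (Fin n → F) := ((𝓕.image (charVec F) : Finset (Fin n → F)) : Set (Fin n → F))
    with hVdef
  set I : Ideal (MvPolynomial (Fin n) F) := vanishIdeal V with hIdef
  have hV01 : ∀ v ∈ V, ∀ i, v i = 0 ∨ v i = 1 := by
    intro v hv i
    rw [hVdef, Finset.mem_coe, Finset.mem_image] at hv
    obtain ⟨Fm, _, rfl⟩ := hv
    by_cases h : i ∈ Fm <;> simp [charVec, h]
  by_contra hSnot
  obtain ⟨h, hhstd, hgI⟩ := exists_nf (lexLt_wf (hlin i₀)) I (monomial (setMon S) 1)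
  set g : MvPolynomial (Fin n) F := monomial (setMon S) 1 - h with hgdef
  have hcoeffg : ∀ m', coeff m' g = (if setMon S = m' then (1:F) else 0) - coeff m' h := by
    intro m'
    rw [hgdef, coeff_sub, coeff_monomial]
  have hhS : coeff (setMon S) h = 0 := by
    by_contra h0
    exact hSnot (hhstd _ (mem_support_iff.mpr h0))
  have hgS : coeff (setMon S) g = 1 := by
    rw [hcoeffg, if_pos rfl, hhS, sub_zero]
  have hgne : g ≠ 0 := by
    intro h0
    rw [h0, coeff_zero] at hgS
    norm_num at hgS
  have hsupp : ∀ m' ∈ g.support, m' = setMon S ∨ m' ∈ h.support := by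
    intro m' hm'
    by_contra hcon
    push_neg at hcon
    have := mem_support_iff.mp hm'
    rw [hcoeffg, if_neg (fun hEq => hcon.1 hEq.symm),
      notMem_support_iff.mp hcon.2, sub_zero] at this
    exact this rfl
  have hlead : ∀ i : Fin n, ∀ m' ∈ g.support, (lin i).le m' (setMon S) := by
    intro i m' hm'
    obtain ⟨mx, hmx, hmax⟩ := exists_lin_max (lin i) g.support ⟨m', hm'⟩
    have hmxS : mx = setMon S := by
      rcases hsupp mx hmx with hEq | hmem
      · exact hEq
      · exfalso
        have h1 : mx ∈ stdMon (lin i) I := by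
          rw [Heq i i₀]
          exact hhstd mx hmem
        exact h1 ⟨g, hgI, hgne, ⟨hmx, hmax⟩⟩
    rw [← hmxS]
    exact hmax m' hm'
  have hzero : ∀ m' ∈ g.support, ∀ i, i ∉ S → m' i = 0 := by
    intro m' hm' i hiS
    by_contra h0
    have hlt : (lin i).lt (setMon S) m' := by
      rw [hlin i]
      refine ⟨⟨0, hn⟩, ?_, ?_⟩
      · rw [hσ i, setMon_apply, if_neg hiS]
        omega
      · intro k hk
        exact absurd hk (by simp [Fin.lt_def])
    have hle := hlead i m' hm'
    exact (((lin i).lt_iff_le_not_ge _ _).mp hlt).2 hle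
  have hsubS : ∀ m' ∈ g.support, m'.support ⊆ S := by
    intro m' hm' j hj
    by_contra hjS
    exact Finsupp.mem_support_iff.mp hj (hzero m' hm' j hjS)
  have hsq : ∀ m' ∈ g.support, ∀ j, m' j ≤ 1 := by
    intro m' hm' j
    rcases hsupp m' hm' with rfl | hmem
    · exact setMon_le_one S j
    · exact stdMon_squarefree (hlin i₀) V hV01 (hhstd m' hmem) j
  -- choose witnesses of shattering
  have hch : ∀ U : Finset (Fin n), ∃ Fm : Finset (Fin n), U ⊆ S → (Fm ∈ 𝓕 ∧ Fm ∩ S = U) := by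
    intro U
    by_cases hU : U ⊆ S
    · obtain ⟨Fm, h1, h2⟩ := hS U hU
      exact ⟨Fm, fun _ => ⟨h1, h2⟩⟩
    · exact ⟨∅, fun hcon => absurd hcon hU⟩
  choose FU hFU using hch
  have hEval : ∀ U ∈ S.powerset, MvPolynomial.eval (charVec F (FU U)) g
      = ∑ m' ∈ g.support, coeff m' g * (if m'.support ⊆ U then 1 else 0) := by
    intro U hU
    rw [Finset.mem_powerset] at hU
    conv_lhs => rw [g.as_sum]
    rw [map_sum]
    apply Finset.sum_congr rfl
    intro m' hm'
    rw [charVec_eval]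
    congr 1
    apply if_congr _ rfl rfl
    constructor
    · intro hsub j hj
      have : j ∈ FU U ∩ S := Finset.mem_inter.mpr ⟨hsub hj, hsubS m' hm' hj⟩
      rwa [(hFU U hU).2] at this
    · intro hsub j hj
      have : j ∈ FU U ∩ S := by rw [(hFU U hU).2]; exact hsub hj
      exact (Finset.mem_inter.mp this).1
  have hcontra : (0 : F) = 1 := by
    calc (0:F) = ∑ U ∈ S.powerset,
          ((-1:F)^((S \ U).card) * MvPolynomial.eval (charVec F (FU U)) g) := by
          symm
          apply Finset.sum_eq_zero
          intro U hU
          rw [Finset.mem_powerset] at hU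
          have hmem : charVec F (FU U) ∈ V := by
            rw [hVdef, Finset.mem_coe]
            exact Finset.mem_image_of_mem _ (hFU U hU).1
          rw [hgI _ hmem, mul_zero]
      _ = ∑ U ∈ S.powerset, ∑ m' ∈ g.support,
            ((-1:F)^((S \ U).card) * (coeff m' g * (if m'.support ⊆ U then 1 else 0))) := by
          apply Finset.sum_congr rfl
          intro U hU
          rw [hEval U hU, Finset.mul_sum]
      _ = ∑ m' ∈ g.support, ∑ U ∈ S.powerset,
            ((-1:F)^((S \ U).card) * (coeff m' g * (if m'.support ⊆ U then 1 else 0))) :=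
          Finset.sum_comm
      _ = ∑ m' ∈ g.support, coeff m' g * ∑ U ∈ S.powerset,
            ((-1:F)^((S \ U).card) * (if m'.support ⊆ U then 1 else 0)) := by
          apply Finset.sum_congr rfl
          intro m' _
          rw [Finset.mul_sum]
          apply Finset.sum_congr rfl
          intro U _
          ring
      _ = ∑ m' ∈ g.support, coeff m' g * (if m'.support = S then 1 else 0) := by
          apply Finset.sum_congr rfl
          intro m' hm'
          rw [alt_sum S m'.support (hsubS m' hm')]
      _ = coeff (setMon S) g * (if (setMon S).support = S then 1 else 0) := by
          apply Finset.sum_eq_single (setMon S)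
          · intro m' hm' hne
            rw [if_neg, mul_zero]
            intro hEq
            apply hne
            ext j
            by_cases hj : j ∈ S
            · have hj' : j ∈ m'.support := by rw [hEq]; exact hj
              have h1 : m' j ≠ 0 := Finsupp.mem_support_iff.mp hj'
              have h2 : m' j ≤ 1 := hsq m' hm' j
              have : m' j = 1 := by omega
              rw [this, setMon_apply, if_pos hj]
            · have hj' : j ∉ m'.support := by rw [hEq]; exact hj
              rw [Finsupp.notMem_support_iff.mp hj', setMon_apply, if_neg hj]
          · intro hnotmem
            exact absurd (mem_support_iff.mpr (by rw [hgS]; norm_num)) hnotmem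
      _ = 1 := by rw [hgS, setMon_support, if_pos rfl, one_mul]
  norm_num at hcontra

end Aux4
section Aux5

open MvPolynomial

variable {n : ℕ} {F : Type*} [Field F]

theorem setMon_injective : Function.Injective (setMon (n := n)) := by
  intro S T hST
  have := congrArg Finsupp.support hST
  rwa [setMon_support, setMon_support] at this

open scoped Classical in
theorem shatteredFamily_eq_shatterer (𝓕 : Finset (Finset (Fin n))) :
    shatteredFamily 𝓕 = 𝓕.shatterer := by
  ext s
  rw [shatteredFamily, Finset.mem_filter, Finset.mem_shatterer]
  simp only [Finset.mem_univ, true_and]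
  constructor
  · intro hs t ht
    obtain ⟨u, hu, huv⟩ := hs t ht
    exact ⟨u, hu, by rwa [Finset.inter_comm]⟩
  · intro hs t ht
    obtain ⟨u, hu, huv⟩ := hs ht
    exact ⟨u, hu, by rwa [Finset.inter_comm]⟩

end Aux5
open scoped Classical in
/-- Theorem `algthm`.
Take `n` orderings of the variables such that for each `i` there is one in which `xᵢ`
is the greatest, with corresponding lex orders. If `𝓕 ⊆ 2^[n]` is not s-extremal, then
two of these lex orders give different standard monomials for `I(𝓕)`. -/
theorem not_sExtremal_exists_differing_lex_orders {n : ℕ} (hn : 0 < n)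
    {F : Type*} [Field F] (𝓕 : Finset (Finset (Fin n)))
    (σ : Fin n → Equiv.Perm (Fin n)) (hσ : ∀ i : Fin n, σ i ⟨0, hn⟩ = i)
    (lin : Fin n → LinearOrder (Mon n)) (hlin : ∀ i : Fin n, IsLexOrder (σ i) (lin i))
    (h : ¬ IsSExtremal 𝓕) :
    ∃ i j : Fin n,
      stdMon (lin i) (vanishIdeal ((𝓕.image (charVec F) : Finset (Fin n → F)) :
          Set (Fin n → F))) ≠
        stdMon (lin j) (vanishIdeal ((𝓕.image (charVec F) : Finset (Fin n → F)) :
          Set (Fin n → F))) := by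
  classical
  by_contra hcon
  push_neg at hcon
  apply h
  have key : ∀ {S : Finset (Fin n)}, Shatters 𝓕 S →
      setMon S ∈ stdMon (lin ⟨0, hn⟩) (vanishIdeal ((𝓕.image (charVec F) :
        Finset (Fin n → F)) : Set (Fin n → F))) := by
    intro S hS
    exact shattered_mem_stdMon hn 𝓕 σ hσ lin hlin hcon hS ⟨0, hn⟩
  set Vf : Finset (Fin n → F) := 𝓕.image (charVec F) with hVf
  have hub : (shatteredFamily 𝓕).card ≤ 𝓕.card := by
    set ι := {s // s ∈ shatteredFamily 𝓕}
    have hι : Fintype.card ι = (shatteredFamily 𝓕).card := Fintype.card_coe _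
    set b : ι → (↥Vf → F) :=
      fun s v => MvPolynomial.eval (v : Fin n → F) (monomial (setMon s.1) (1:F)) with hb
    have hli : LinearIndependent F b := by
      rw [Fintype.linearIndependent_iff]
      intro c hc
      by_contra hex
      push_neg at hex
      obtain ⟨i1, hi1⟩ := hex
      set p : MvPolynomial (Fin n) F := ∑ s : ι, monomial (setMon s.1) (c s) with hp
      have hpcoeff : ∀ s : ι, coeff (setMon s.1) p = c s := by
        intro s
        rw [hp, MvPolynomial.coeff_sum]
        rw [Finset.sum_eq_single s]
        · rw [coeff_monomial, if_pos rfl]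
        · intro t _ hts
          rw [coeff_monomial, if_neg]
          intro hEq
          exact hts (Subtype.ext (setMon_injective hEq))
        · intro hs
          exact absurd (Finset.mem_univ s) hs
      have hpne : p ≠ 0 := fun h0 => hi1 (by rw [← hpcoeff i1, h0, coeff_zero])
      have hpI : p ∈ vanishIdeal (↑Vf : Set (Fin n → F)) := by
        intro v hv
        have h2 : (∑ s : ι, c s • b s) ⟨v, hv⟩ = 0 := by rw [hc]; rfl
        rw [Finset.sum_apply] at h2
        calc MvPolynomial.eval v p
            = ∑ s : ι, MvPolynomial.eval v (monomial (setMon s.1) (c s)) := by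
              rw [hp, map_sum]
          _ = ∑ s : ι, c s * MvPolynomial.eval v (monomial (setMon s.1) (1:F)) := by
              apply Finset.sum_congr rfl
              intro s _
              rw [eval_monomial, eval_monomial]
              ring
          _ = 0 := by
              rw [← h2]
              apply Finset.sum_congr rfl
              intro s _
              rw [hb]
              simp [smul_eq_mul]
      obtain ⟨mx, hmx⟩ := exists_leadMon (lin ⟨0, hn⟩) hpne
      have hmxmem : mx ∈ p.support := hmx.1
      have hex2 : ∃ s : ι, setMon s.1 = mx := by
        have hcoeffne := mem_support_iff.mp hmxmem
        rw [hp, MvPolynomial.coeff_sum] at hcoeffne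
        obtain ⟨s, _, hs⟩ := Finset.exists_ne_zero_of_sum_ne_zero hcoeffne
        rw [coeff_monomial] at hs
        by_cases hEq : setMon s.1 = mx
        · exact ⟨s, hEq⟩
        · rw [if_neg hEq] at hs
          exact absurd rfl hs
      obtain ⟨s, hsEq⟩ := hex2
      have hstd : mx ∈ stdMon (lin ⟨0, hn⟩) (vanishIdeal (↑Vf : Set (Fin n → F))) := by
        rw [← hsEq]
        have hSh : Shatters 𝓕 s.1 := by
          have h3 := s.2
          have h4 : (↑s : Finset (Fin n)) ∈ 𝓕.shatterer := by
            rw [← shatteredFamily_eq_shatterer]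
            exact h3
          have h5 := Finset.mem_shatterer.mp h4
          intro T hT
          obtain ⟨u, hu, huv⟩ := h5 hT
          exact ⟨u, hu, by rwa [Finset.inter_comm]⟩
        exact key hSh
      exact hstd ⟨p, hpI, hpne, hmx⟩
    have hfin := hli.fintype_card_le_finrank
    rw [hι, Module.finrank_pi, Fintype.card_coe] at hfin
    exact hfin.trans (Finset.card_image_le)
  have hlb : 𝓕.card ≤ (shatteredFamily 𝓕).card := by
    rw [shatteredFamily_eq_shatterer]
    exact Finset.card_le_card_shatterer 𝓕
  exact le_antisymm hub hlb
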